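/- (Concavity inequality for σ_{n-1} with a very negative eigenvalue.) Let n ≥ 3, F = σ_{n-1}, and λ ∈ Γ_{n-1} with λ_1 = ... = λ_m > λ_{m+1} ≥ ... ≥ λ_n. There exist a constant A > 1 and a small constant δ_0 > 0, depending on n, A and max F, such that if λ_n ≤ -A, then for every ξ ∈ ℝ^n with ξ_i = 0 for 1 < i ≤ m: -Σ_{p≠q} F^{pp,qq} ξ_p ξ_q + (Σ_i F^{ii} ξ_i)² / F + 2 Σ_{i>m} F^{ii} ξ_i² / (λ_1 - λ_i) ≥ (1 + δ_0) · F^{11} ξ_1² / λ_1. -/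

import Mathlib

set_option maxHeartbeats 4000000

open Finset

lemma sum_pcard_pred {α : Type*} [DecidableEq α] [LinearOrder α] (T : Finset α) (hT : T.Nonempty)
    (f : α → ℝ) :
    ∑ s ∈ T.powersetCard (T.card - 1), ∏ x ∈ s, f x = ∑ a ∈ T, ∏ x ∈ T.erase a, f x := by
  have hc : 1 ≤ T.card := Finset.Nonempty.card_pos hT
  have key : ∀ s ∈ T.powersetCard (T.card - 1), (T \ s).Nonempty := by
    intro s hs
    rw [Finset.mem_powersetCard] at hs
    apply Finset.card_pos.mp
    rw [Finset.card_sdiff_of_subset hs.1, hs.2]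
    omega
  refine (Finset.sum_bij' (i := fun a ha => T.erase a)
    (j := fun s hs => (T \ s).min' (key s hs)) ?_ ?_ ?_ ?_ ?_).symm
  · intro a ha
    rw [Finset.mem_powersetCard]
    exact ⟨Finset.erase_subset _ _, by rw [Finset.card_erase_of_mem ha]⟩
  · intro s hs
    exact Finset.sdiff_subset (Finset.min'_mem _ (key s hs))
  · intro a ha
    have : T \ T.erase a = {a} := by
      rw [Finset.erase_eq, Finset.sdiff_sdiff_self_left]
      simp [ha]
    simp [this]
  · intro s hs
    have hs' := (Finset.mem_powersetCard.mp hs)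
    have hcard : (T \ s).card = 1 := by
      rw [Finset.card_sdiff_of_subset hs'.1, hs'.2]; omega
    obtain ⟨b, hb⟩ := Finset.card_eq_one.mp hcard
    have hmin : (T \ s).min' (key s hs) = b := by simp [hb]
    show T.erase ((T \ s).min' (key s hs)) = s
    rw [hmin, Finset.erase_eq, ← hb, Finset.sdiff_sdiff_self_left, Finset.inter_eq_right.mpr hs'.1]
  · intro a ha
    rfl

noncomputable def esym {n : ℕ} (k : ℕ) (lam : Fin n → ℝ) : ℝ :=
  ∑ s ∈ Finset.univ.powersetCard k, ∏ i ∈ s, lam i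

noncomputable def esym1 {n : ℕ} (k : ℕ) (lam : Fin n → ℝ) (i : Fin n) : ℝ :=
  ∑ s ∈ (Finset.univ.erase i).powersetCard k, ∏ j ∈ s, lam j

noncomputable def esym2 {n : ℕ} (k : ℕ) (lam : Fin n → ℝ) (i j : Fin n) : ℝ :=
  ∑ s ∈ ((Finset.univ.erase i).erase j).powersetCard k, ∏ l ∈ s, lam l

lemma prod_erase_eq {n : ℕ} (lam : Fin n → ℝ) (hne : ∀ i, lam i ≠ 0) (T : Finset (Fin n))
    {a : Fin n} (ha : a ∈ T) :
    ∏ x ∈ T.erase a, lam x = (∏ x ∈ T, lam x) * (lam a)⁻¹ := by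
  rw [eq_mul_inv_iff_mul_eq₀ (hne a)]
  exact Finset.prod_erase_mul T lam ha

lemma esym_top {n : ℕ} (hn : 1 ≤ n) (lam : Fin n → ℝ) (hne : ∀ i, lam i ≠ 0) :
    esym (n-1) lam = (∏ i, lam i) * ∑ i, (lam i)⁻¹ := by
  have hT : (Finset.univ : Finset (Fin n)).Nonempty := ⟨⟨0, by omega⟩, Finset.mem_univ _⟩
  have hcard : n - 1 = (Finset.univ : Finset (Fin n)).card - 1 := by simp
  rw [esym, hcard, sum_pcard_pred _ hT, Finset.mul_sum]
  exact Finset.sum_congr rfl fun a _ => prod_erase_eq lam hne _ (Finset.mem_univ a)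

lemma esym1_eq {n : ℕ} (hn : 2 ≤ n) (lam : Fin n → ℝ) (hne : ∀ i, lam i ≠ 0) (i : Fin n) :
    esym1 (n-2) lam i
      = (∏ j, lam j) * (lam i)⁻¹ * ((∑ j, (lam j)⁻¹) - (lam i)⁻¹) := by
  have hT : (Finset.univ.erase i).Nonempty := by
    apply Finset.card_pos.mp
    rw [Finset.card_erase_of_mem (Finset.mem_univ i)]
    simp; omega
  have hcard : n - 2 = (Finset.univ.erase i).card - 1 := by
    rw [Finset.card_erase_of_mem (Finset.mem_univ i)]
    simp; omega
  rw [esym1, hcard, sum_pcard_pred _ hT]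
  have step : ∀ a ∈ Finset.univ.erase i,
      ∏ x ∈ (Finset.univ.erase i).erase a, lam x = (∏ j, lam j) * (lam i)⁻¹ * (lam a)⁻¹ := by
    intro a ha
    rw [prod_erase_eq lam hne _ ha, prod_erase_eq lam hne _ (Finset.mem_univ i)]
  rw [Finset.sum_congr rfl step, ← Finset.mul_sum,
    Finset.sum_erase_eq_sub (Finset.mem_univ i)]

lemma esym2_eq {n : ℕ} (hn : 3 ≤ n) (lam : Fin n → ℝ) (hne : ∀ i, lam i ≠ 0) {p q : Fin n}
    (hpq : p ≠ q) :
    esym2 (n-3) lam p q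
      = (∏ j, lam j) * (lam p)⁻¹ * (lam q)⁻¹
        * ((∑ j, (lam j)⁻¹) - (lam p)⁻¹ - (lam q)⁻¹) := by
  have hq : q ∈ Finset.univ.erase p := Finset.mem_erase.mpr ⟨hpq.symm, Finset.mem_univ q⟩
  have hcarde : ((Finset.univ.erase p).erase q).card = n - 2 := by
    rw [Finset.card_erase_of_mem hq, Finset.card_erase_of_mem (Finset.mem_univ p)]
    simp; omega
  have hT : ((Finset.univ.erase p).erase q).Nonempty := by
    apply Finset.card_pos.mp; rw [hcarde]; omega
  have hcard : n - 3 = ((Finset.univ.erase p).erase q).card - 1 := by rw [hcarde]; omega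
  rw [esym2, hcard, sum_pcard_pred _ hT]
  have step : ∀ a ∈ (Finset.univ.erase p).erase q,
      ∏ x ∈ ((Finset.univ.erase p).erase q).erase a, lam x
        = (∏ j, lam j) * (lam p)⁻¹ * (lam q)⁻¹ * (lam a)⁻¹ := by
    intro a ha
    rw [prod_erase_eq lam hne _ ha, prod_erase_eq lam hne _ hq,
      prod_erase_eq lam hne _ (Finset.mem_univ p)]
  rw [Finset.sum_congr rfl step, ← Finset.mul_sum,
    Finset.sum_erase_eq_sub hq, Finset.sum_erase_eq_sub (Finset.mem_univ p)]

lemma esym_zero {n : ℕ} (lam : Fin n → ℝ) : esym 0 lam = 1 := by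
  simp [esym]

lemma vieta_fun {n : ℕ} (lam : Fin n → ℝ) (x : ℝ) :
    ∏ i, (lam i + x) = ∑ j ∈ Finset.range (n+1), esym j lam * x ^ (n - j) := by
  rw [Finset.prod_add]
  have h1 : ∀ t ∈ (Finset.univ : Finset (Fin n)).powerset,
      (∏ i ∈ t, lam i) * ∏ _i ∈ Finset.univ \ t, x
        = (∏ i ∈ t, lam i) * x ^ (n - t.card) := by
    intro t ht
    rw [Finset.prod_const, Finset.card_sdiff_of_subset (Finset.mem_powerset.mp ht)]
    simp
  rw [Finset.sum_congr rfl h1]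
  rw [Finset.sum_powerset (Finset.univ : Finset (Fin n))
    (fun t => (∏ i ∈ t, lam i) * x ^ (n - t.card))]
  simp only [Finset.card_univ, Fintype.card_fin]
  apply Finset.sum_congr rfl
  intro j hj
  rw [esym, Finset.sum_mul]
  apply Finset.sum_congr rfl
  intro t ht
  rw [(Finset.mem_powersetCard.mp ht).2]

lemma g_mono {n : ℕ} (hn : 1 ≤ n) (lam : Fin n → ℝ)
    (hpos : ∀ j : ℕ, 1 ≤ j → j ≤ n-1 → 0 < esym j lam)
    {u v : ℝ} (hu : 0 ≤ u) (huv : u < v) :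
    ∏ i, (lam i + u) < ∏ i, (lam i + v) := by
  rw [vieta_fun, vieta_fun]
  apply Finset.sum_lt_sum
  · intro j hj
    rcases Nat.eq_zero_or_pos j with rfl | hj1
    · simp only [esym_zero, one_mul, Nat.sub_zero]
      exact pow_le_pow_left₀ hu huv.le n
    rcases eq_or_lt_of_le (Nat.lt_succ_iff.mp (Finset.mem_range.mp hj)) with hjn | hjn
    · rw [hjn]; simp
    · have h1 : 0 < esym j lam := hpos j hj1 (by omega)
      apply mul_le_mul_of_nonneg_left _ h1.le
      exact pow_le_pow_left₀ hu huv.le _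
  · refine ⟨0, Finset.mem_range.mpr (by omega), ?_⟩
    simp only [esym_zero, one_mul, Nat.sub_zero]
    exact pow_lt_pow_left₀ huv hu (by omega)

lemma no_double_root {n : ℕ} (hn : 3 ≤ n) (lam : Fin n → ℝ)
    (hpos : ∀ j : ℕ, 1 ≤ j → j ≤ n-1 → 0 < esym j lam)
    {b : ℝ} (hb : 0 < b) {p q : Fin n} (hpq : p ≠ q)
    (hp : lam p = -b) (hq : lam q = -b) : False := by
  set f : Fin n → Polynomial ℝ := fun i => Polynomial.X + Polynomial.C (lam i) with hf
  set G : Polynomial ℝ := ∏ i, f i with hG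
  have hqmem : q ∈ Finset.univ.erase p := Finset.mem_erase.mpr ⟨hpq.symm, Finset.mem_univ q⟩
  have e1 : ∏ i, f i = f p * ∏ i ∈ Finset.univ.erase p, f i :=
    (Finset.mul_prod_erase _ f (Finset.mem_univ p)).symm
  have e2 : ∏ i ∈ Finset.univ.erase p, f i
      = f q * ∏ i ∈ (Finset.univ.erase p).erase q, f i :=
    (Finset.mul_prod_erase _ f hqmem).symm
  have hfact : G = f p * (f q * ∏ i ∈ (Finset.univ.erase p).erase q, f i) := by
    rw [hG, e1, e2]
  have hd0 : Polynomial.eval b (Polynomial.derivative G) = 0 := by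
    rw [hfact, Polynomial.derivative_mul, Polynomial.derivative_mul]
    simp [hf, hp, hq]
  have hGsum : G = ∑ j ∈ Finset.range (n+1),
      Polynomial.C (esym j lam) * Polynomial.X ^ (n-j) := by
    apply Polynomial.funext
    intro x
    rw [hG, Polynomial.eval_prod, Polynomial.eval_finset_sum]
    simp only [hf]
    simp only [Polynomial.eval_mul, Polynomial.eval_pow, Polynomial.eval_C,
      Polynomial.eval_X, Polynomial.eval_add]
    rw [← vieta_fun]
    exact Finset.prod_congr rfl fun i _ => by ring
  have hd1 : 0 < Polynomial.eval b (Polynomial.derivative G) := by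
    rw [hGsum, Polynomial.derivative_sum]
    rw [Polynomial.eval_finset_sum]
    have hterm : ∀ j ∈ Finset.range (n+1),
        Polynomial.eval b (Polynomial.derivative (Polynomial.C (esym j lam) * Polynomial.X ^ (n-j)))
          = esym j lam * (((n-j : ℕ) : ℝ) * b ^ (n-j-1)) := by
      intro j hj
      rw [Polynomial.derivative_C_mul, Polynomial.derivative_X_pow]
      simp [mul_assoc]
    rw [Finset.sum_congr rfl hterm]
    apply Finset.sum_pos'
    · intro j hj
      rcases eq_or_lt_of_le (Nat.lt_succ_iff.mp (Finset.mem_range.mp hj)) with hjn | hjn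
      · rw [hjn]; simp
      · rcases Nat.eq_zero_or_pos j with rfl | hj1
        · simp only [esym_zero, one_mul]
          positivity
        · have h1 : 0 < esym j lam := hpos j hj1 (by omega)
          positivity
    · refine ⟨0, Finset.mem_range.mpr (by omega), ?_⟩
      simp only [esym_zero, one_mul, Nat.sub_zero]
      have h0 : (0:ℝ) < ((n : ℕ) : ℝ) := by exact_mod_cast (by omega : 0 < n)
      exact mul_pos h0 (pow_pos hb _)
  linarith

lemma middle_pos {n : ℕ} (hn : 3 ≤ n) (lam : Fin n → ℝ) (hmono : Antitone lam)
    (hpos : ∀ j : ℕ, 1 ≤ j → j ≤ n-1 → 0 < esym j lam)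
    (hlast : lam ⟨n-1, Nat.sub_one_lt (by omega)⟩ < 0) :
    ∀ i : Fin n, (i:ℕ) < n - 1 → 0 < lam i := by
  by_contra hcon
  push_neg at hcon
  obtain ⟨i0, hi0, hi0'⟩ := hcon
  set b : ℝ := -lam ⟨n-1, by omega⟩ with hbdef
  have hb : 0 < b := by simp [hbdef]; linarith
  have hn2 : lam (⟨n-2, by omega⟩ : Fin n) ≤ 0 := by
    refine le_trans (hmono ?_) hi0'
    rw [Fin.le_def]; simp; omega
  have hn2n1 : lam (⟨n-1, by omega⟩ : Fin n) ≤ lam (⟨n-2, by omega⟩ : Fin n) := by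
    apply hmono; rw [Fin.le_def]; simp; omega
  set c : ℝ := -lam ⟨n-2, by omega⟩ with hcdef
  have hc0 : 0 ≤ c := by simp [hcdef]; linarith
  have hcb : c ≤ b := by simp [hcdef, hbdef]; linarith
  have hgb : ∏ i, (lam i + b) = 0 :=
    Finset.prod_eq_zero (Finset.mem_univ (⟨n-1, by omega⟩ : Fin n)) (by simp [hbdef])
  have hgc : ∏ i, (lam i + c) = 0 :=
    Finset.prod_eq_zero (Finset.mem_univ (⟨n-2, by omega⟩ : Fin n)) (by simp [hcdef])
  rcases eq_or_lt_of_le hcb with hceq | hclt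
  · -- double root
    have hne : (⟨n-2, by omega⟩ : Fin n) ≠ (⟨n-1, by omega⟩ : Fin n) := by
      simp [Fin.ext_iff]; omega
    exact no_double_root hn lam hpos hb hne
      (by rw [← hceq]; simp [hcdef]) (by simp [hbdef])
  · have := g_mono (by omega : 1 ≤ n) lam hpos hc0 hclt
    rw [hgb, hgc] at this
    exact lt_irrefl 0 this

lemma quad_sup (s κ t y z : ℝ) (hs : s < 0) (hκ : κ < 0) :
    (κ - t^2/s)*z^2 + (y + t*z)^2/s ≤ ((κ - t^2/s)/(s*κ)) * y^2 := by
  have hs0 : s ≠ 0 := ne_of_lt hs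
  have hκ0 : κ ≠ 0 := ne_of_lt hκ
  have key : (κ - t^2/s)*z^2 + (y + t*z)^2/s - ((κ - t^2/s)/(s*κ)) * y^2
      = (s*κ*z + t*y)^2/(s^2*κ) := by
    field_simp
    ring
  have h2 : (s*κ*z + t*y)^2/(s^2*κ) ≤ 0 := by
    apply div_nonpos_of_nonneg_of_nonpos (sq_nonneg _)
    have : 0 < s^2 := by positivity
    nlinarith
  linarith

lemma cs_weighted {ι : Type*} (s : Finset ι) (u d x : ι → ℝ) (hd : ∀ i ∈ s, 0 < d i) :
    (∑ i ∈ s, u i * x i)^2 ≤ (∑ i ∈ s, u i^2 / d i) * (∑ i ∈ s, d i * x i^2) := by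
  have h := Finset.sum_mul_sq_le_sq_mul_sq s (fun i => u i / Real.sqrt (d i))
    (fun i => Real.sqrt (d i) * x i)
  have e1 : ∑ i ∈ s, u i / Real.sqrt (d i) * (Real.sqrt (d i) * x i) = ∑ i ∈ s, u i * x i := by
    apply Finset.sum_congr rfl
    intro i hi
    have h1 : Real.sqrt (d i) ≠ 0 := ne_of_gt (Real.sqrt_pos.mpr (hd i hi))
    field_simp
  have e2 : ∑ i ∈ s, (u i / Real.sqrt (d i))^2 = ∑ i ∈ s, u i^2 / d i := by
    apply Finset.sum_congr rfl
    intro i hi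
    rw [div_pow, Real.sq_sqrt (hd i hi).le]
  have e3 : ∑ i ∈ s, (Real.sqrt (d i) * x i)^2 = ∑ i ∈ s, d i * x i^2 := by
    apply Finset.sum_congr rfl
    intro i hi
    rw [mul_pow, Real.sq_sqrt (hd i hi).le]
  rw [e1, e2, e3] at h
  exact h

lemma support_split {n m : ℕ} (hn : 1 ≤ n) (hm : 1 ≤ m) (g : Fin n → ℝ)
    (hg : ∀ i : Fin n, 0 < (i:ℕ) → (i:ℕ) < m → g i = 0) :
    ∑ i, g i = g ⟨0, by omega⟩ + ∑ i ∈ Finset.univ.filter (fun i : Fin n => m ≤ (i:ℕ)), g i := by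
  classical
  rw [← Finset.sum_filter_add_sum_filter_not Finset.univ (fun i : Fin n => m ≤ (i:ℕ)) g]
  have h1 : ∑ i ∈ Finset.univ.filter (fun i : Fin n => ¬ m ≤ (i:ℕ)), g i = g ⟨0, by omega⟩ := by
    apply Finset.sum_eq_single_of_mem
    · simp; omega
    · intro i hi hine
      rw [Finset.mem_filter] at hi
      apply hg
      · rcases Nat.eq_zero_or_pos (i:ℕ) with h0 | h0
        · exfalso; apply hine; apply Fin.ext; simp [h0]
        · exact h0
      · omega
  rw [h1]; ring

lemma double_sum_eq {n : ℕ} (c x : Fin n → ℝ) (s : ℝ) :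
    ∑ p : Fin n, ∑ q : Fin n, (if p ≠ q then (s - c p - c q) * x p * x q else 0)
      = s*(∑ i, x i)^2 - 2*(∑ i, c i * x i)*(∑ i, x i)
        - s*(∑ i, x i^2) + 2*(∑ i, c i * x i^2) := by
  have inner : ∀ p : Fin n,
      ∑ q : Fin n, (if p ≠ q then (s - c p - c q) * x p * x q else 0)
        = (∑ q : Fin n, (s - c p - c q) * x p * x q) - (s - 2*c p) * x p * x p := by
    intro p
    have e : ∀ q : Fin n, (if p ≠ q then (s - c p - c q) * x p * x q else 0)
        = (s - c p - c q) * x p * x q - (if p = q then (s - c p - c q) * x p * x q else 0) := by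
      intro q
      by_cases h : p = q <;> simp [h]
    rw [Finset.sum_congr rfl (fun q _ => e q), Finset.sum_sub_distrib, Finset.sum_ite_eq]
    simp only [Finset.mem_univ, if_true]
    ring
  rw [Finset.sum_congr rfl (fun p _ => inner p), Finset.sum_sub_distrib]
  have e2 : ∀ p : Fin n, ∑ q : Fin n, (s - c p - c q) * x p * x q
      = (s - c p) * x p * (∑ i, x i) - x p * (∑ i, c i * x i) := by
    intro p
    rw [Finset.mul_sum, Finset.mul_sum]
    rw [← Finset.sum_sub_distrib]
    apply Finset.sum_congr rfl
    intro q _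
    ring
  rw [Finset.sum_congr rfl (fun p _ => e2 p), Finset.sum_sub_distrib]
  have e3a : ∑ p : Fin n, (s - c p) * x p = s * (∑ i, x i) - (∑ i, c i * x i) := by
    rw [Finset.mul_sum, ← Finset.sum_sub_distrib]
    apply Finset.sum_congr rfl; intro q _; ring
  have e3 : ∑ p : Fin n, (s - c p) * x p * (∑ i, x i)
      = s * (∑ i, x i) * (∑ i, x i) - (∑ i, c i * x i) * (∑ i, x i) := by
    rw [← Finset.sum_mul, e3a]; ring
  have e4 : ∑ p : Fin n, x p * (∑ i, c i * x i) = (∑ i, x i) * (∑ i, c i * x i) := by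
    rw [← Finset.sum_mul]
  have e5 : ∑ p : Fin n, (s - 2*c p) * x p * x p
      = s * (∑ i, x i^2) - 2*(∑ i, c i * x i^2) := by
    rw [Finset.mul_sum, Finset.mul_sum, ← Finset.sum_sub_distrib]
    apply Finset.sum_congr rfl; intro q _; ring
  rw [e3, e4, e5]
  ring

lemma pkey (e L : ℝ) (he : 0 < e) (he1 : e ≤ 1/96) (heL : e*L ≤ 1/48) (hL : 2 ≤ L) :
    (2*L + e - e^2 - e*L) * (1152/1103 + (L-2)/2) ≤ L + L^2 - e*L^2 - e^2*L := by
  have h1 : e*L*L ≤ L/48 := by nlinarith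
  have h2 : e^2*L ≤ e/48 := by nlinarith
  have h3 : 0 < e*L := by positivity
  nlinarith [mul_nonneg he.le (sq_nonneg L), sq_nonneg e, mul_pos he h3]

lemma scalar_main (b σ l1 W s tn an κ d1 : ℝ) (hb : 0 < b) (hσ : 0 < σ) (hl1 : 0 < l1)
    (hσ2 : 2/l1 ≤ σ) (hβ : b*σ < 1) (heps : l1*(1/b - σ) ≤ 1/48)
    (hW0 : 0 ≤ W) (hW : W ≤ (σ - 2/l1)/2)
    (hs : s = σ - 1/b) (htn : tn = -(1/b))
    (han : an = s - 2*tn + 2*(s - tn)*(-b)/(l1 - (-b)))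
    (hκ : κ = an + tn^2/s) (hd1 : d1 = (1-1/24)*(1/l1) + (1/24)*s) :
    κ < 0 ∧ 0 < d1 ∧ 0 ≤ an/(s*κ) ∧ (an/(s*κ)) * ((1/l1)^2/d1 + W) ≤ 1 := by
  have hb0 : b ≠ 0 := ne_of_gt hb
  have hl0 : l1 ≠ 0 := ne_of_gt hl1
  have hsneg : s < 0 := by
    rw [hs]
    have h1 : σ < 1/b := by
      rw [lt_div_iff₀ hb]; linarith [mul_comm b σ]
    linarith
  have hs0 : s ≠ 0 := ne_of_lt hsneg
  have h2b : 2*b < l1 := by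
    have h1 : b*(2/l1) ≤ b*σ := by nlinarith
    have h2 : b*(2/l1) = 2*b/l1 := by ring
    have h3 : 2*b/l1 < 1 := by linarith
    rw [div_lt_one hl1] at h3
    linarith
  have hlb : 0 < l1 + b := by linarith
  set u : ℝ := σ*(l1-b) with hu
  have hupos : 0 < u := by rw [hu]; apply mul_pos hσ; linarith
  have hbs : b*s = b*σ - 1 := by rw [hs]; field_simp
  have e_an : an * (b*(l1+b)) = b*u + l1 + b := by
    rw [han, hs, htn, hu]
    have h1 : l1 - -b = l1 + b := by ring
    rw [h1]
    field_simp
    ring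
  have hQ : 0 < b*u + l1 + b := by positivity
  have an_pos : 0 < an := by nlinarith [mul_pos hb hlb]
  have e_sκ : (s*κ) * (b*(l1+b)) = b*σ*(2+u) := by
    have h1 : s*κ*(b*(l1+b)) = (b*s)*(an*(b*(l1+b)))/b + (l1+b)/b := by
      rw [hκ, htn]
      field_simp
    rw [h1, e_an, hbs, hu]
    field_simp
    ring
  have hsκ : 0 < s*κ := by
    have h1 : 0 < b*σ*(2+u) := by positivity
    nlinarith [mul_pos hb hlb]
  have κneg : κ < 0 := by nlinarith
  have h1small : 1/b - σ ≤ (1/48)/l1 := by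
    rw [le_div_iff₀ hl1]
    calc (1/b - σ)*l1 = l1*(1/b-σ) := by ring
      _ ≤ 1/48 := heps
  have hsmall : -(1/48)*(1/l1) ≤ s := by
    rw [hs]
    have h2 : (1/48)/l1 = (1/48)*(1/l1) := by ring
    linarith [h1small, h2]
  have d1_ge : (1103/1152)*(1/l1) ≤ d1 := by rw [hd1]; linarith
  have d1_pos : 0 < d1 := by
    have : (0:ℝ) < (1103/1152)*(1/l1) := by positivity
    linarith
  have ρ_nonneg : 0 ≤ an/(s*κ) := le_of_lt (div_pos an_pos hsκ)
  refine ⟨κneg, d1_pos, ρ_nonneg, ?_⟩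
  have ht1d1 : (1/l1)^2/d1 ≤ (1152/1103)*(1/l1) := by
    rw [div_le_iff₀ d1_pos]
    nlinarith [mul_le_mul_of_nonneg_left d1_ge (by positivity : (0:ℝ) ≤ (1152/1103)*(1/l1))]
  set e : ℝ := 1 - b*σ with he
  set L : ℝ := σ*l1 with hL
  have hepos : 0 < e := by rw [he]; linarith
  have hL2 : 2 ≤ L := by
    rw [hL]
    calc (2:ℝ) = (2/l1)*l1 := by field_simp
    _ ≤ σ*l1 := mul_le_mul_of_nonneg_right hσ2 hl1.le
  have hσb : 0 ≤ 1/b - σ := by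
    have : σ - 1/b < 0 := by rw [← hs]; exact hsneg
    linarith
  have heL : e*L ≤ 1/48 := by
    have h1 : e*L = (b*σ)*(l1*(1/b - σ)) := by rw [he, hL]; field_simp
    have h2 : 0 ≤ l1*(1/b-σ) := by positivity
    rw [h1]
    nlinarith [mul_pos hb hσ]
  have he1 : e ≤ 1/96 := by
    have h1 : e = b*(1/b - σ) := by rw [he]; field_simp
    have h3 : b*(1/b-σ) ≤ (l1/2)*(1/b-σ) := by nlinarith
    have h4 : (l1/2)*(1/b-σ) ≤ (l1*(1/b-σ))/2 := by linarith [mul_comm l1 (1/b-σ)]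
    rw [h1]
    linarith
  have PK := pkey e L hepos he1 heL hL2
  have E1 : σ*(b*u+l1+b) = 2*L + e - e^2 - e*L := by rw [hu, he, hL]; ring
  have E2 : b*σ*(2+u)*(σ*l1) = L + L^2 - e*L^2 - e^2*L := by rw [hu, he, hL]; ring
  have hWl : W*l1 ≤ (L-2)/2 := by
    have h1 : W*l1 ≤ ((σ - 2/l1)/2)*l1 := by nlinarith
    have h2 : ((σ - 2/l1)/2)*l1 = (L-2)/2 := by rw [hL]; field_simp
    linarith
  have hgoal2 : (b*u + l1 + b) * ((1152/1103)*(1/l1) + W) ≤ b*σ*(2+u) := by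
    rw [← mul_le_mul_iff_of_pos_right (by positivity : (0:ℝ) < σ*l1)]
    have expand : (b*u+l1+b) * ((1152/1103)*(1/l1) + W) * (σ*l1)
        = (σ*(b*u+l1+b))*(1152/1103 + W*l1) := by field_simp
    rw [expand, E1]
    have hbase : 0 ≤ 2*L + e - e^2 - e*L := by
      rw [← E1]; positivity
    calc (2*L + e - e^2 - e*L)*(1152/1103 + W*l1)
        ≤ (2*L + e - e^2 - e*L)*(1152/1103 + (L-2)/2) :=
          mul_le_mul_of_nonneg_left (by linarith) hbase
      _ ≤ L + L^2 - e*L^2 - e^2*L := PK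
      _ = b*σ*(2+u)*(σ*l1) := E2.symm
  -- conclude
  set X : ℝ := (1/l1)^2/d1 + W with hX
  have hXnn : 0 ≤ X := by
    rw [hX]
    have : 0 ≤ (1/l1)^2/d1 := by positivity
    linarith
  have hX' : X ≤ (1152/1103)*(1/l1) + W := by rw [hX]; linarith
  have key : an * X ≤ s*κ := by
    rw [← mul_le_mul_iff_of_pos_right (mul_pos hb hlb)]
    have h5 : an * X * (b*(l1+b)) = (b*u+l1+b) * X := by
      rw [← e_an]; ring
    rw [h5, e_sκ]
    calc (b*u+l1+b) * X ≤ (b*u+l1+b) * ((1152/1103)*(1/l1) + W) :=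
          mul_le_mul_of_nonneg_left hX' hQ.le
      _ ≤ b*σ*(2+u) := hgoal2
  rw [div_mul_eq_mul_div, div_le_one hsκ]
  exact key
def GardingCone (n k : ℕ) : Set (Fin n → ℝ) :=
  {lam | ∀ j : ℕ, 1 ≤ j → j ≤ k → 0 < esym j lam}

theorem stmt15 {n : ℕ} (hn : 3 ≤ n) (maxF : ℝ) :
    ∃ A : ℝ, 1 < A ∧ ∃ δ0 : ℝ, 0 < δ0 ∧
      ∀ (m : ℕ) (lam ξ : Fin n → ℝ),
        lam ∈ GardingCone n (n - 1) → Antitone lam →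
        1 ≤ m → m ≤ n →
        (∀ i : Fin n, (i : ℕ) < m → lam i = lam ⟨0, by omega⟩) →
        (∀ i : Fin n, (i : ℕ) = m → lam i < lam ⟨0, by omega⟩) →
        esym (n - 1) lam ≤ maxF →
        lam ⟨n - 1, by omega⟩ ≤ -A →
        (∀ i : Fin n, 0 < (i : ℕ) → (i : ℕ) < m → ξ i = 0) →
        -(∑ p : Fin n, ∑ q : Fin n,
              if p ≠ q then esym2 (n - 3) lam p q * ξ p * ξ q else 0)
          + (∑ i : Fin n, esym1 (n - 2) lam i * ξ i) ^ 2 / esym (n - 1) lam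
          + 2 * ∑ i ∈ Finset.univ.filter (fun i : Fin n => m ≤ (i : ℕ)),
              esym1 (n - 2) lam i * ξ i ^ 2 / (lam ⟨0, by omega⟩ - lam i)
        ≥ (1 + δ0) * esym1 (n - 2) lam ⟨0, by omega⟩ * ξ ⟨0, by omega⟩ ^ 2 /
            lam ⟨0, by omega⟩ := by
  refine ⟨max 2 (48*maxF), lt_of_lt_of_le one_lt_two (le_max_left _ _), 1/24, by norm_num, ?_⟩
  intro m lam ξ hcone hmono hm1 hmn htop hstrict hmaxF hlastA hsupp
  set A : ℝ := max 2 (48*maxF) with hA_def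
  have hA2 : (2:ℝ) ≤ A := le_max_left _ _
  set z0 : Fin n := ⟨0, by omega⟩ with hz0
  set last : Fin n := ⟨n-1, by omega⟩ with hlast
  have hcone' : ∀ j : ℕ, 1 ≤ j → j ≤ n-1 → 0 < esym j lam := hcone
  have hF : 0 < esym (n-1) lam := hcone' (n-1) (by omega) le_rfl
  have hmaxF0 : 0 < maxF := lt_of_lt_of_le hF hmaxF
  have hA48 : 48*maxF ≤ A := le_max_right _ _
  have hlast_neg : lam last < 0 := lt_of_le_of_lt hlastA (by linarith)
  set b : ℝ := -(lam last) with hb_def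
  have hb : 0 < b := by rw [hb_def]; linarith
  have hbA : A ≤ b := by rw [hb_def]; linarith
  have hmidpos : ∀ i : Fin n, (i:ℕ) < n-1 → 0 < lam i :=
    middle_pos hn lam hmono hcone' hlast_neg
  have hpos_ne : ∀ i : Fin n, i ≠ last → 0 < lam i := by
    intro i hi
    apply hmidpos
    have h2 : (i:ℕ) ≠ n-1 := by
      intro hc
      apply hi
      apply Fin.ext
      rw [hlast]
      exact hc
    have h3 := i.isLt
    omega
  have hne0 : ∀ i : Fin n, lam i ≠ 0 := by
    intro i
    by_cases hi : i = last
    · rw [hi]; exact ne_of_lt hlast_neg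
    · exact ne_of_gt (hpos_ne i hi)
  set t : Fin n → ℝ := fun i => (lam i)⁻¹ with ht_def
  set P : ℝ := ∏ i, lam i with hP_def
  set s : ℝ := ∑ i, t i with hs_def
  have hFPs : esym (n-1) lam = P * s := esym_top (by omega) lam hne0
  have hP_neg : P < 0 := by
    have h1 : P = (∏ i ∈ Finset.univ.erase last, lam i) * lam last := by
      rw [hP_def, Finset.prod_erase_mul _ _ (Finset.mem_univ last)]
    have h2 : 0 < ∏ i ∈ Finset.univ.erase last, lam i := by
      apply Finset.prod_pos
      intro i hi
      exact hpos_ne i (Finset.mem_erase.mp hi).1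
    rw [h1]
    exact mul_neg_of_pos_of_neg h2 hlast_neg
  have hs_neg : s < 0 := by
    have hPs : 0 < P * s := hFPs ▸ hF
    by_contra hcon
    push_neg at hcon
    have h1 : P * s ≤ 0 := mul_nonpos_of_nonpos_of_nonneg hP_neg.le hcon
    linarith [hPs, h1]
  have hP0 : P ≠ 0 := ne_of_lt hP_neg
  have hs0 : s ≠ 0 := ne_of_lt hs_neg
  have hlamlast : lam last = -b := by rw [hb_def]; ring
  have htlast : t last = -(1/b) := by
    show (lam last)⁻¹ = -(1/b)
    rw [hlamlast]
    field_simp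
  set σ : ℝ := s - t last with hσ_def
  have hσ_sum : σ = ∑ i ∈ Finset.univ.erase last, t i := by
    rw [hσ_def, hs_def, Finset.sum_erase_eq_sub (Finset.mem_univ last)]
  have ht_pos : ∀ i : Fin n, i ≠ last → 0 < t i := by
    intro i hi
    show 0 < (lam i)⁻¹
    exact inv_pos.mpr (hpos_ne i hi)
  have hσ : 0 < σ := by
    rw [hσ_sum]
    apply Finset.sum_pos
    · intro i hi
      exact ht_pos i (Finset.mem_erase.mp hi).1
    · refine ⟨z0, Finset.mem_erase.mpr ⟨?_, Finset.mem_univ z0⟩⟩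
      rw [hz0, hlast]
      intro hc
      have := Fin.mk.injEq 0 _ (n-1) _ ▸ hc
      simp [Fin.ext_iff] at hc
      omega
  have hσlt : σ < 1/b := by
    have : σ = s + 1/b := by rw [hσ_def, htlast]; ring
    rw [this]; linarith
  have hβ : b*σ < 1 := by
    have := mul_lt_mul_of_pos_left hσlt hb
    rw [mul_one_div, div_self (ne_of_gt hb)] at this
    exact this
  have hgtb : ∀ i : Fin n, i ≠ last → b < lam i := by
    intro i hi
    have h1 : t i ≤ σ := by
      rw [hσ_sum]
      apply Finset.single_le_sum (fun j hj => (ht_pos j (Finset.mem_erase.mp hj).1).le)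
      exact Finset.mem_erase.mpr ⟨hi, Finset.mem_univ i⟩
    have h2 : (lam i)⁻¹ < 1/b := lt_of_le_of_lt h1 hσlt
    have h3 : 0 < lam i := hpos_ne i hi
    rw [one_div] at h2
    exact (inv_lt_inv₀ h3 hb).mp h2
  have hz0last : z0 ≠ last := by
    rw [hz0, hlast]
    simp [Fin.ext_iff]
    omega
  have hl1 : 0 < lam z0 := hpos_ne z0 hz0last
  have hl10 : lam z0 ≠ 0 := ne_of_gt hl1
  have hl1b : b < lam z0 := hgtb z0 hz0last
  have ht1 : t z0 = 1/(lam z0) := by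
    show (lam z0)⁻¹ = 1/(lam z0)
    rw [one_div]
  have hlam_le : ∀ i : Fin n, lam i ≤ lam z0 := by
    intro i
    apply hmono
    rw [hz0]
    exact Fin.mk_le_of_le_val (by omega)
  have ht_ge : ∀ i : Fin n, i ≠ last → t z0 ≤ t i := by
    intro i hi
    show (lam z0)⁻¹ ≤ (lam i)⁻¹
    exact inv_anti₀ (hpos_ne i hi) (hlam_le i)
  -- sigma >= 2/l1
  set i1 : Fin n := ⟨1, by omega⟩ with hi1
  have hi1last : i1 ≠ last := by
    rw [hi1, hlast]; simp [Fin.ext_iff]; omega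
  have hi1z0 : z0 ≠ i1 := by
    rw [hi1, hz0]; simp [Fin.ext_iff]
  have hσ2 : 2/(lam z0) ≤ σ := by
    have hsub : {z0, i1} ⊆ Finset.univ.erase last := by
      intro j hj
      rcases Finset.mem_insert.mp hj with rfl | hj2
      · exact Finset.mem_erase.mpr ⟨hz0last, Finset.mem_univ _⟩
      · rw [Finset.mem_singleton.mp hj2]
        exact Finset.mem_erase.mpr ⟨hi1last, Finset.mem_univ _⟩
    have h1 : ∑ j ∈ ({z0, i1} : Finset (Fin n)), t j ≤ σ := by
      rw [hσ_sum]
      apply Finset.sum_le_sum_of_subset_of_nonneg hsub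
      intro j hj _
      exact (ht_pos j (Finset.mem_erase.mp hj).1).le
    rw [Finset.sum_pair hi1z0] at h1
    have h2 : t z0 ≤ t i1 := ht_ge i1 hi1last
    have h3 : 2/(lam z0) = t z0 + t z0 := by rw [ht1]; ring
    linarith
  -- eps bound
  have heps : (lam z0)*(1/b - σ) ≤ 1/48 := by
    have hsm : 1/b - σ = -s := by rw [hσ_def, htlast]; ring
    set M : ℝ := ∏ i ∈ (Finset.univ.erase z0).erase last, lam i with hM_def
    have hlastmem : last ∈ Finset.univ.erase z0 :=
      Finset.mem_erase.mpr ⟨Ne.symm hz0last, Finset.mem_univ _⟩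
    have hPfact : P = lam z0 * (lam last * M) := by
      rw [hP_def, ← Finset.mul_prod_erase _ _ (Finset.mem_univ z0),
        ← Finset.mul_prod_erase _ _ hlastmem]
    have hMcard : ((Finset.univ.erase z0).erase last).card = n - 2 := by
      rw [Finset.card_erase_of_mem hlastmem, Finset.card_erase_of_mem (Finset.mem_univ z0)]
      simp
      omega
    have hMge : A^(n-2) ≤ M := by
      rw [hM_def, ← hMcard]
      have := Finset.prod_le_prod (s := (Finset.univ.erase z0).erase last)
        (f := fun _ => A) (g := lam) (fun i _ => by linarith)
        (fun i hi => le_of_lt (lt_of_le_of_lt (le_of_le_of_eq hbA rfl)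
          (hgtb i (Finset.mem_erase.mp hi).1)))
      rw [Finset.prod_const] at this
      exact this
    have hApow : A ≤ A^(n-2) := by
      calc A = A^1 := (pow_one A).symm
      _ ≤ A^(n-2) := pow_le_pow_right₀ (by linarith) (by omega)
    have hbM : 48*maxF ≤ b*M := by
      have hA1' : (1:ℝ) ≤ A := by linarith
      have hM1 : 1 ≤ M := le_trans (one_le_pow₀ hA1') hMge
      have hb1 : 48*maxF ≤ b := le_trans hA48 hbA
      have h2 : b ≤ b*M := le_mul_of_one_le_right hb.le hM1
      linarith [hb1, h2]
    have hFeq : esym (n-1) lam = (lam z0)*(-s)*(b*M) := by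
      rw [hFPs, hPfact, hlamlast]
      ring
    have hnn : 0 ≤ (lam z0)*(-s) := mul_nonneg hl1.le (by linarith [hs_neg])
    rw [hsm]
    have hFle : (lam z0)*(-s)*(b*M) ≤ maxF := hFeq ▸ hmaxF
    by_contra hcon
    push_neg at hcon
    have hXbM : (lam z0)*(-s)*(48*maxF) ≤ (lam z0)*(-s)*(b*M) :=
      mul_le_mul_of_nonneg_left hbM hnn
    have h9 : (1/48)*(48*maxF) < ((lam z0)*(-s))*(48*maxF) :=
      mul_lt_mul_of_pos_right hcon (by linarith [hmaxF0])
    have h10 : (1/48:ℝ)*(48*maxF) = maxF := by ring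
    linarith [hFle, hXbM, h9, h10]
  set x : Fin n → ℝ := fun i => t i * ξ i with hx_def
  have hsum_eq : ∑ j, (lam j)⁻¹ = s := by rw [hs_def]
  have hxi : ∀ i, ξ i = lam i * x i := by
    intro i
    show ξ i = lam i * ((lam i)⁻¹ * ξ i)
    rw [← mul_assoc, mul_inv_cancel₀ (hne0 i), one_mul]
  have htlam : ∀ i, t i * lam i = 1 := by
    intro i
    show (lam i)⁻¹ * lam i = 1
    exact inv_mul_cancel₀ (hne0 i)
  set X : ℝ := ∑ i, x i with hX_def
  set T2 : ℝ := ∑ i, t i * x i with hT2_def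
  set Q : ℝ := ∑ i, x i^2 with hQ_def
  set R : ℝ := ∑ i, t i * x i^2 with hR_def
  set S : Finset (Fin n) := Finset.univ.filter (fun i : Fin n => m ≤ (i:ℕ)) with hS_def
  -- rewrite the three big terms
  have e1i : ∀ i, esym1 (n-2) lam i * ξ i = P * ((s - t i) * x i) := by
    intro i
    rw [esym1_eq (by omega) lam hne0 i, hsum_eq]
    show P * t i * (s - t i) * ξ i = P * ((s - t i) * (t i * ξ i))
    ring
  have DD_eq : (∑ p : Fin n, ∑ q : Fin n,
        if p ≠ q then esym2 (n - 3) lam p q * ξ p * ξ q else 0)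
      = P * (∑ p : Fin n, ∑ q : Fin n, if p ≠ q then (s - t p - t q) * x p * x q else 0) := by
    rw [Finset.mul_sum]
    apply Finset.sum_congr rfl
    intro p _
    rw [Finset.mul_sum]
    apply Finset.sum_congr rfl
    intro q _
    by_cases hpq : p = q
    · simp [hpq]
    · have h2 := esym2_eq hn lam hne0 hpq
      rw [if_pos hpq, if_pos hpq, h2, hsum_eq]
      show P * t p * t q * (s - t p - t q) * ξ p * ξ q
        = P * ((s - t p - t q) * (t p * ξ p) * (t q * ξ q))
      ring
  have aux_lin : ∑ i, (s - t i) * x i = s*X - T2 := by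
    rw [hX_def, hT2_def, Finset.mul_sum, ← Finset.sum_sub_distrib]
    apply Finset.sum_congr rfl
    intro i _
    ring
  have SS_eq : ∑ i, esym1 (n-2) lam i * ξ i = P * (s*X - T2) := by
    rw [Finset.sum_congr rfl (fun i _ => e1i i), ← Finset.mul_sum, aux_lin]
  have Frac_eq : (P * (s*X - T2))^2 / esym (n-1) lam = P * ((s*X - T2)^2/s) := by
    rw [hFPs]
    field_simp
  have TT_eq : ∑ i ∈ S, esym1 (n - 2) lam i * ξ i ^ 2 / (lam z0 - lam i)
      = P * ∑ i ∈ S, (s - t i) * lam i * x i^2 / (lam z0 - lam i) := by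
    rw [Finset.mul_sum]
    apply Finset.sum_congr rfl
    intro i _
    have hnum : esym1 (n - 2) lam i * ξ i ^ 2 = P * ((s - t i) * lam i * x i^2) := by
      rw [esym1_eq (by omega) lam hne0 i, hsum_eq, hxi i]
      show P * (lam i)⁻¹ * (s - (lam i)⁻¹) * (lam i * x i) ^ 2
        = P * ((s - (lam i)⁻¹) * lam i * x i ^ 2)
      have h3 : (lam i)⁻¹ * lam i = 1 := inv_mul_cancel₀ (hne0 i)
      linear_combination (P * (s - (lam i)⁻¹) * lam i * x i^2) * h3
    rw [hnum, mul_div_assoc]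
  have RHS_eq : (1 + 1/24) * esym1 (n - 2) lam z0 * ξ z0 ^ 2 / lam z0
      = P * ((1 + 1/24) * (s - t z0) * x z0^2) := by
    rw [esym1_eq (by omega) lam hne0 z0, hsum_eq, hxi z0]
    show (1 + 1/24) * (P * (lam z0)⁻¹ * (s - (lam z0)⁻¹)) * (lam z0 * ((lam z0)⁻¹ * ξ z0)) ^ 2 / lam z0
      = P * ((1 + 1/24) * (s - (lam z0)⁻¹) * ((lam z0)⁻¹ * ξ z0) ^ 2)
    field_simp
  rw [DD_eq, SS_eq, Frac_eq, TT_eq, RHS_eq]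
  rw [double_sum_eq t x s]
  rw [← hX_def, ← hT2_def, ← hQ_def, ← hR_def]
  set TT' : ℝ := ∑ i ∈ S, (s - t i) * lam i * x i^2 / (lam z0 - lam i) with hTT_def
  have combine : -(P * (s*X^2 - 2*T2*X - s*Q + 2*R)) + P * ((s*X - T2)^2/s) + 2*(P*TT')
      = P * (-(s*X^2 - 2*T2*X - s*Q + 2*R) + (s*X - T2)^2/s + 2*TT') := by ring
  rw [combine]
  rw [ge_iff_le]
  apply mul_le_mul_of_nonpos_left _ hP_neg.le
  have ID : -(s*X^2 - 2*T2*X - s*Q + 2*R) + (s*X - T2)^2/s = s*Q - 2*R + T2^2/s := by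
    field_simp
    ring
  rw [ID]
  have hx0 : ∀ i : Fin n, 0 < (i:ℕ) → (i:ℕ) < m → x i = 0 := by
    intro i h1 h2
    show t i * ξ i = 0
    rw [hsupp i h1 h2, mul_zero]
  have hQs : Q = x z0^2 + ∑ i ∈ S, x i^2 := by
    rw [hQ_def, hS_def]
    exact support_split (by omega) hm1 _ (fun i h1 h2 => by rw [hx0 i h1 h2]; ring)
  have hRs : R = t z0 * x z0^2 + ∑ i ∈ S, t i * x i^2 := by
    rw [hR_def, hS_def]
    exact support_split (by omega) hm1 _ (fun i h1 h2 => by rw [hx0 i h1 h2]; ring)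
  have hT2s : T2 = t z0 * x z0 + ∑ i ∈ S, t i * x i := by
    rw [hT2_def, hS_def]
    exact support_split (by omega) hm1 _ (fun i h1 h2 => by rw [hx0 i h1 h2]; ring)
  have ht1pos : 0 < t z0 := ht_pos z0 hz0last
  have hsmneg : -s ≤ (1/48) * t z0 := by
    have hsm2 : 1/b - σ = -s := by rw [hσ_def, htlast]; ring
    have h1 : (lam z0) * (-s) ≤ 1/48 := by rw [← hsm2]; exact heps
    rw [ht1]
    rw [mul_one_div]
    rw [le_div_iff₀ hl1]
    linarith [mul_comm (lam z0) (-s)]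
  by_cases hmn' : m = n
  · -- case m = n : only x z0 nonzero
    have hSempty : S = ∅ := by
      rw [hS_def]
      apply Finset.filter_false_of_mem
      intro i _
      have := i.isLt
      omega
    rw [hSempty] at hQs hRs hT2s
    simp only [Finset.sum_empty, add_zero] at hQs hRs hT2s
    rw [hTT_def, hSempty, Finset.sum_empty, hQs, hRs, hT2s]
    have hfr : (t z0*x z0)^2/s ≤ 0 :=
      div_nonpos_of_nonneg_of_nonpos (sq_nonneg _) hs_neg.le
    have coeff_nn : 0 ≤ (23/24)*t z0 + (1/24)*s := by linarith [hsmneg, ht1pos]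
    have c1 : 0 ≤ ((23/24)*t z0 + (1/24)*s)*x z0^2 := mul_nonneg coeff_nn (sq_nonneg _)
    linarith [c1, hfr]
  · -- main case m ≤ n - 1
    have hmn2 : m ≤ n - 1 := by omega
    have hlastS : last ∈ S := by
      rw [hS_def, Finset.mem_filter]
      refine ⟨Finset.mem_univ _, ?_⟩
      rw [hlast]
      exact hmn2
    set Sm : Finset (Fin n) := S.erase last with hSm_def
    have hz0S : z0 ∉ S := by
      rw [hS_def, Finset.mem_filter]
      rw [hz0]
      simp
      omega
    have hz0Sm : z0 ∉ Sm := fun h => hz0S (Finset.mem_of_mem_erase h)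
    have hSm_ne_last : ∀ i ∈ Sm, i ≠ last := fun i hi => (Finset.mem_erase.mp hi).1
    have hS_lt : ∀ i ∈ S, lam i < lam z0 := by
      intro i hi
      rw [hS_def, Finset.mem_filter] at hi
      set im : Fin n := ⟨m, by omega⟩ with him
      have h1 : lam i ≤ lam im := by
        apply hmono
        rw [him, Fin.le_def]
        exact hi.2
      have h2 : lam im < lam z0 := hstrict im rfl
      linarith
    have hSm_lam_pos : ∀ i ∈ Sm, 0 < lam i := fun i hi => hpos_ne i (hSm_ne_last i hi)
    have hSm_tpos : ∀ i ∈ Sm, 0 < t i := fun i hi => ht_pos i (hSm_ne_last i hi)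
    have hSm_D : ∀ i ∈ Sm, 0 < lam z0 - lam i := by
      intro i hi
      have := hS_lt i (Finset.mem_of_mem_erase hi)
      linarith
    set an : ℝ := s - 2*t last + 2*(s - t last)*lam last/(lam z0 - lam last) with han_def
    set κ : ℝ := an + (t last)^2/s with hκ_def
    set d1 : ℝ := (1-1/24)*(1/lam z0) + (1/24)*s with hd1_def
    set W : ℝ := ∑ i ∈ Sm, (t i - t z0)/2 with hW_def
    have hW0 : 0 ≤ W := by
      rw [hW_def]
      apply Finset.sum_nonneg
      intro i hi
      have := ht_ge i (hSm_ne_last i hi)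
      linarith
    have hWle : W ≤ (σ - 2/(lam z0))/2 := by
      have hsub : Sm ⊆ Finset.univ.erase last := by
        intro j hj
        exact Finset.mem_erase.mpr ⟨hSm_ne_last j hj, Finset.mem_univ j⟩
      have h1 : ∑ i ∈ Sm, (t i - t z0) ≤ ∑ i ∈ Finset.univ.erase last, (t i - t z0) := by
        apply Finset.sum_le_sum_of_subset_of_nonneg hsub
        intro j hj _
        have := ht_ge j (Finset.mem_erase.mp hj).1
        linarith
      have h2 : ∑ i ∈ Finset.univ.erase last, (t i - t z0) = σ - ((n:ℝ)-1)*t z0 := by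
        rw [Finset.sum_sub_distrib, ← hσ_sum, Finset.sum_const,
          Finset.card_erase_of_mem (Finset.mem_univ last), Finset.card_univ,
          Fintype.card_fin, nsmul_eq_mul]
        have hc : ((n - 1 : ℕ) : ℝ) = (n:ℝ) - 1 := by
          rw [Nat.cast_sub (by omega : (1:ℕ) ≤ n), Nat.cast_one]
        rw [hc]
      have h3 : ((n:ℝ)-1) ≥ 2 := by
        have : (3:ℝ) ≤ (n:ℝ) := by exact_mod_cast hn
        linarith
      have h4 : ∑ i ∈ Sm, (t i - t z0) = 2*W := by
        rw [hW_def, Finset.mul_sum]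
        apply Finset.sum_congr rfl
        intro i _
        ring
      have h5 : 2/(lam z0) = 2*t z0 := by rw [ht1]; ring
      have h6 : 2*t z0 ≤ ((n:ℝ)-1)*t z0 := mul_le_mul_of_nonneg_right h3 ht1pos.le
      linarith [h1, h2, h4, h5, h6]
    have hs_id : s = σ - 1/b := by rw [hσ_def, htlast]; ring
    have han' : an = s - 2*(t last) + 2*(s - t last)*(-b)/(lam z0 - (-b)) := by
      rw [han_def, hlamlast]
    obtain ⟨hκneg, hd1pos, hρnn, hρbound⟩ :=
      scalar_main b σ (lam z0) W s (t last) an κ d1 hb hσ hl1 hσ2 hβ heps hW0 hWle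
        hs_id htlast han' hκ_def hd1_def
    -- weight function
    set d : Fin n → ℝ := fun i => if i = z0 then d1 else 2*t i + 2/(lam z0 - lam i) with hd_def
    have hdz0 : d z0 = d1 := by rw [hd_def]; simp
    have hdSm : ∀ i ∈ Sm, d i = 2*t i + 2/(lam z0 - lam i) := by
      intro i hi
      rw [hd_def]
      have : i ≠ z0 := fun h => hz0Sm (h ▸ hi)
      simp [this]
    have hdSm_pos : ∀ i ∈ Sm, 0 < d i := by
      intro i hi
      rw [hdSm i hi]
      have h1 := hSm_tpos i hi
      have h2 := hSm_D i hi
      positivity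
    -- per-index bound on Sm
    have PB : ∀ i ∈ Sm, (s - 2*t i)*x i^2 + 2*((s - t i)*lam i*x i^2/(lam z0 - lam i))
        ≤ -(d i * x i^2) := by
      intro i hi
      have hD := hSm_D i hi
      have hlp := hSm_lam_pos i hi
      have hcoeff : (s - 2*t i) + 2*((s - t i)*lam i/(lam z0 - lam i)) + d i
          = s*(lam z0 + lam i)/(lam z0 - lam i) := by
        rw [hdSm i hi]
        show (s - 2*(lam i)⁻¹) + 2*((s - (lam i)⁻¹)*lam i/(lam z0 - lam i))
            + (2*(lam i)⁻¹ + 2/(lam z0 - lam i)) = s*(lam z0 + lam i)/(lam z0 - lam i)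
        field_simp
        ring
      have hcoeff_neg : (s - 2*t i) + 2*((s - t i)*lam i/(lam z0 - lam i)) ≤ -(d i) := by
        have h1 : s*(lam z0 + lam i)/(lam z0 - lam i) ≤ 0 := by
          apply div_nonpos_of_nonpos_of_nonneg _ hD.le
          have h2 : (0:ℝ) ≤ (-s)*(lam z0 + lam i) :=
            mul_nonneg (by linarith [hs_neg]) (by linarith [hl1, hlp])
          linarith [h2]
        linarith
      have hexp : (s - 2*t i)*x i^2 + 2*((s - t i)*lam i*x i^2/(lam z0 - lam i))
          = ((s - 2*t i) + 2*((s - t i)*lam i/(lam z0 - lam i))) * x i^2 := by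
        ring
      rw [hexp]
      calc ((s - 2*t i) + 2*((s - t i)*lam i/(lam z0 - lam i))) * x i^2
          ≤ (-(d i)) * x i^2 := mul_le_mul_of_nonneg_right hcoeff_neg (sq_nonneg _)
        _ = -(d i * x i^2) := by ring
    -- Cauchy-Schwarz
    set y : ℝ := t z0 * x z0 + ∑ i ∈ Sm, t i * x i with hy_def
    have hT2y : T2 = y + t last * x last := by
      rw [hT2s, hy_def, ← Finset.add_sum_erase S _ hlastS, ← hSm_def]
      ring
    have hWalt : ∑ i ∈ Sm, (t i)^2 / d i = W := by
      rw [hW_def]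
      apply Finset.sum_congr rfl
      intro i hi
      rw [hdSm i hi]
      have hD := hSm_D i hi
      have hlp := hSm_lam_pos i hi
      show ((lam i)⁻¹)^2/(2*(lam i)⁻¹ + 2/(lam z0 - lam i)) = ((lam i)⁻¹ - (lam z0)⁻¹)/2
      rw [div_eq_div_iff]
      · field_simp
        ring
      · have h1 : 0 < (lam i)⁻¹ := inv_pos.mpr hlp
        positivity
      · norm_num
    have CS : y^2 ≤ ((t z0)^2/d1 + W) * (d1*x z0^2 + ∑ i ∈ Sm, d i * x i^2) := by
      have hins : y = ∑ i ∈ insert z0 Sm, t i * x i := by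
        rw [Finset.sum_insert hz0Sm, hy_def]
      have hdpos : ∀ i ∈ insert z0 Sm, 0 < d i := by
        intro i hi
        rcases Finset.mem_insert.mp hi with rfl | hi2
        · rw [hdz0]; exact hd1pos
        · exact hdSm_pos i hi2
      have h := cs_weighted (insert z0 Sm) t d x hdpos
      rw [← hins] at h
      rw [Finset.sum_insert hz0Sm, Finset.sum_insert hz0Sm, hdz0, hWalt] at h
      exact h
    -- quadratic sup in x last
    have QS : an*(x last)^2 + (y + t last * x last)^2/s ≤ (an/(s*κ))*y^2 := by
      have h := quad_sup s κ (t last) y (x last) hs_neg hκneg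
      have han2 : κ - (t last)^2/s = an := by rw [hκ_def]; ring
      rw [han2] at h
      exact h
    -- final assembly
    have hBnn : 0 ≤ d1*x z0^2 + ∑ i ∈ Sm, d i * x i^2 := by
      apply add_nonneg
      · positivity
      · apply Finset.sum_nonneg
        intro i hi
        exact mul_nonneg (hdSm_pos i hi).le (sq_nonneg _)
    have hρ2 : (an/(s*κ))*y^2 ≤ d1*x z0^2 + ∑ i ∈ Sm, d i * x i^2 := by
      have h1 : (an/(s*κ))*y^2 ≤ (an/(s*κ)) * (((t z0)^2/d1 + W) * (d1*x z0^2 + ∑ i ∈ Sm, d i * x i^2)) :=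
        mul_le_mul_of_nonneg_left CS hρnn
      have ht1' : t z0 = 1/(lam z0) := ht1
      have h2 : (an/(s*κ)) * ((t z0)^2/d1 + W) ≤ 1 := by
        rw [ht1']
        exact hρbound
      calc (an/(s*κ))*y^2 ≤ ((an/(s*κ)) * ((t z0)^2/d1 + W)) * (d1*x z0^2 + ∑ i ∈ Sm, d i * x i^2) := by
            rw [← mul_assoc] at h1; exact h1
        _ ≤ 1 * (d1*x z0^2 + ∑ i ∈ Sm, d i * x i^2) := mul_le_mul_of_nonneg_right h2 hBnn
        _ = d1*x z0^2 + ∑ i ∈ Sm, d i * x i^2 := one_mul _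
    -- decompose goal sums
    have hSQ : s*Q - 2*R = (s - 2*t z0)*x z0^2 + ∑ i ∈ S, (s - 2*t i)*x i^2 := by
      have h : ∑ i ∈ S, (s - 2*t i)*x i^2 = s*(∑ i ∈ S, x i^2) - 2*(∑ i ∈ S, t i*x i^2) := by
        rw [Finset.mul_sum, Finset.mul_sum, ← Finset.sum_sub_distrib]
        apply Finset.sum_congr rfl
        intro i _
        ring
      rw [hQs, hRs, h]
      ring
    have hsplit1 : ∑ i ∈ S, (s - 2*t i)*x i^2
        = (s - 2*t last)*x last^2 + ∑ i ∈ Sm, (s - 2*t i)*x i^2 := by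
      rw [← Finset.add_sum_erase S _ hlastS, ← hSm_def]
    have hsplit2 : TT' = (s - t last)*lam last*x last^2/(lam z0 - lam last)
        + ∑ i ∈ Sm, (s - t i)*lam i*x i^2/(lam z0 - lam i) := by
      rw [hTT_def, ← Finset.add_sum_erase S _ hlastS, ← hSm_def]
    have han_comb : (s - 2*t last)*x last^2
        + 2*((s - t last)*lam last*x last^2/(lam z0 - lam last)) = an*(x last)^2 := by
      rw [han_def]
      ring
    have hPBsum : ∑ i ∈ Sm, ((s - 2*t i)*x i^2 + 2*((s - t i)*lam i*x i^2/(lam z0 - lam i)))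
        ≤ ∑ i ∈ Sm, -(d i * x i^2) := Finset.sum_le_sum PB
    have hsum_split : ∑ i ∈ Sm, ((s - 2*t i)*x i^2 + 2*((s - t i)*lam i*x i^2/(lam z0 - lam i)))
        = ∑ i ∈ Sm, (s - 2*t i)*x i^2 + 2*∑ i ∈ Sm, (s - t i)*lam i*x i^2/(lam z0 - lam i) := by
      rw [Finset.sum_add_distrib, Finset.mul_sum]
    have hfinal_id : (s - 2*t z0)*x z0^2 + d1*x z0^2 = (1+1/24)*(s - t z0)*x z0^2 := by
      rw [hd1_def, ht1]
      ring
    -- put it all together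
    rw [hSQ, hsplit1, hsplit2, hT2y]
    have step1 : (s - 2*t last)*x last^2 + 2*((s - t last)*lam last*x last^2/(lam z0 - lam last))
        + (y + t last * x last)^2/s ≤ (an/(s*κ))*y^2 := by
      calc (s - 2*t last)*x last^2 + 2*((s - t last)*lam last*x last^2/(lam z0 - lam last))
            + (y + t last * x last)^2/s
          = an*(x last)^2 + (y + t last * x last)^2/s := by rw [← han_comb]
        _ ≤ (an/(s*κ))*y^2 := QS
    have step2 : ∑ i ∈ Sm, (s - 2*t i)*x i^2
          + 2*∑ i ∈ Sm, (s - t i)*lam i*x i^2/(lam z0 - lam i)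
        ≤ -(∑ i ∈ Sm, d i * x i^2) := by
      rw [← hsum_split]
      calc ∑ i ∈ Sm, ((s - 2*t i)*x i^2 + 2*((s - t i)*lam i*x i^2/(lam z0 - lam i)))
          ≤ ∑ i ∈ Sm, -(d i * x i^2) := hPBsum
        _ = -(∑ i ∈ Sm, d i * x i^2) := by rw [Finset.sum_neg_distrib]
    calc (s - 2*t z0)*x z0^2 + ((s - 2*t last)*x last^2 + ∑ i ∈ Sm, (s - 2*t i)*x i^2)
          + (y + t last*x last)^2/s
          + 2*((s - t last)*lam last*x last^2/(lam z0 - lam last)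
            + ∑ i ∈ Sm, (s - t i)*lam i*x i^2/(lam z0 - lam i))
        = (s - 2*t z0)*x z0^2
          + ((s - 2*t last)*x last^2 + 2*((s - t last)*lam last*x last^2/(lam z0 - lam last))
            + (y + t last*x last)^2/s)
          + (∑ i ∈ Sm, (s - 2*t i)*x i^2
            + 2*∑ i ∈ Sm, (s - t i)*lam i*x i^2/(lam z0 - lam i)) := by ring
      _ ≤ (s - 2*t z0)*x z0^2 + (an/(s*κ))*y^2 + -(∑ i ∈ Sm, d i * x i^2) := by
          have := add_le_add step1 step2
          linarith
      _ ≤ (s - 2*t z0)*x z0^2 + (d1*x z0^2 + ∑ i ∈ Sm, d i * x i^2) + -(∑ i ∈ Sm, d i * x i^2) := by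
          linarith [hρ2]
      _ = (s - 2*t z0)*x z0^2 + d1*x z0^2 := by ring
      _ = (1+1/24)*(s - t z0)*x z0^2 := hfinal_id
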